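/- T₁ is closed under Kleene plus: if a regular language L is accepted by some DFA with at most one semi-observable state, then L⁺ is also accepted by some DFA with at most one semi-observable state. -/

import Mathlib

open Computability

def ObsState {α σ : Type} (M : DFA α σ) (q : σ) : Prop :=
  ∃ w : List α, M.evalFrom q w ∈ M.accept

def SemiObsState {α σ : Type} (M : DFA α σ) (q : σ) : Prop :=
  ObsState M q ∧ ∃ a : α, ¬ ObsState M (M.step q a)

def Accessible {α σ : Type} (M : DFA α σ) : Prop :=
  ∀ q : σ, ∃ w : List α, M.eval w = q

def AcceptsObservably (α : Type) (L : Language α) : Prop :=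
  ∃ (σ : Type) (_ : Fintype σ) (M : DFA α σ),
    Accessible M ∧ (∀ q : σ, ObsState M q) ∧ M.accepts = L

def InT (α : Type) (k : ℕ) (L : Language α) : Prop :=
  ∃ (σ : Type) (_ : Fintype σ) (M : DFA α σ),
    Accessible M ∧ M.accepts = L ∧ {q : σ | SemiObsState M q}.ncard ≤ k

def MinimalAlphabet {α : Type} (L : Language α) : Prop :=
  ∀ a : α, ∃ w ∈ L, a ∈ w

section Aux

variable {α σ : Type} (M : DFA α σ)

/-- observability is preserved backwards along runs -/
lemma obs_of_evalFrom {q : σ} (v : List α) (h : ObsState M (M.evalFrom q v)) :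
    ObsState M q := by
  obtain ⟨w, hw⟩ := h
  exact ⟨v ++ w, by rwa [DFA.evalFrom_of_append]⟩

lemma obs_of_step {q : σ} {a : α} (h : ObsState M (M.step q a)) : ObsState M q :=
  obs_of_evalFrom M [a] h

/-- the subset automaton for `L⁺`, keeping only observable states in the subsets -/
def plusDFA : DFA α (Set σ) where
  step := fun S a =>
    {r | ObsState M r ∧ ((∃ p ∈ S, M.step p a = r) ∨
      (r = M.start ∧ ∃ p ∈ S, M.step p a ∈ M.accept))}
  start := {r | ObsState M r ∧ r = M.start}
  accept := {S | ∃ q ∈ S, q ∈ M.accept}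

/-- extract a last nonempty piece from a kstar decomposition -/
lemma kstar_last_piece {l : Language α} {x : List α} (hx : x ∈ l∗) (hne : x ≠ []) :
    ∃ u v, x = u ++ v ∧ u ∈ l∗ ∧ v ∈ l ∧ v ≠ [] := by
  rw [Language.mem_kstar_iff_exists_nonempty] at hx
  obtain ⟨S, rfl, hS⟩ := hx
  induction S using List.reverseRecOn with
  | nil => simp at hne
  | append_singleton S y _ =>
    refine ⟨S.flatten, y, by simp, ?_, (hS y (by simp)).1, (hS y (by simp)).2⟩
    exact Language.join_mem_kstar fun z hz => (hS z (by simp [hz])).1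

/-- characterization of the run of the subset automaton -/
lemma plusDFA_eval (w : List α) :
    (plusDFA M).eval w = {q | ObsState M q ∧ ∃ u v, w = u ++ v ∧
      u ∈ M.accepts∗ ∧ M.evalFrom M.start v = q} := by
  induction w using List.reverseRecOn with
  | nil =>
    ext q
    simp only [DFA.eval_nil, plusDFA, Set.mem_setOf_eq]
    constructor
    · rintro ⟨hq, rfl⟩
      exact ⟨hq, [], [], rfl, Language.nil_mem_kstar _, rfl⟩
    · rintro ⟨hq, u, v, huv, hu, hv⟩
      obtain ⟨rfl, rfl⟩ := List.append_eq_nil_iff.mp huv.symm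
      exact ⟨hq, hv.symm⟩
  | append_singleton w a ih =>
    rw [DFA.eval_append_singleton, ih]
    ext q
    simp only [plusDFA, Set.mem_setOf_eq]
    constructor
    · rintro ⟨hq, ⟨p, ⟨hp, u, v, rfl, hu, rfl⟩, rfl⟩ | ⟨rfl, p, ⟨hp, u, v, rfl, hu, rfl⟩, hacc⟩⟩
      · refine ⟨hq, u, v ++ [a], by simp, hu, ?_⟩
        rw [DFA.evalFrom_append_singleton]
      · refine ⟨hq, u ++ (v ++ [a]), [], by simp, ?_, rfl⟩
        have hv : v ++ [a] ∈ M.accepts := by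
          rw [DFA.mem_accepts, DFA.eval, DFA.evalFrom_append_singleton]
          exact hacc
        exact (kstar_mul_le_kstar : M.accepts∗ * M.accepts ≤ M.accepts∗) (Language.append_mem_mul hu hv)
    · rintro ⟨hq, u, v, huv, hu, hv⟩
      rcases List.eq_nil_or_concat v with rfl | ⟨v', b, rfl⟩ <;>
        try simp only [List.concat_eq_append] at *
      · -- v = [], q = start, u = w ++ [a] ∈ L∗
        rw [List.append_nil] at huv
        subst huv
        obtain ⟨u₀, v₀, hx, hu₀, hv₀, hv₀ne⟩ := kstar_last_piece hu (by simp)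
        obtain ⟨v₀', b, rfl⟩ := List.eq_nil_or_concat v₀ |>.resolve_left hv₀ne
        simp only [List.concat_eq_append] at hx hv₀
        rw [← List.append_assoc] at hx
        obtain ⟨hw, hb⟩ := List.append_inj' hx rfl
        cases List.singleton_injective hb
        set p := M.evalFrom M.start v₀' with hp
        have hacc : M.step p a ∈ M.accept := by
          rw [hp, ← DFA.evalFrom_append_singleton]
          exact hv₀
        have hpo : ObsState M p := ⟨[a], hacc⟩
        exact ⟨hq, Or.inr ⟨hv.symm, p, ⟨hpo, u₀, v₀', hw, hu₀, rfl⟩, hacc⟩⟩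
      · -- v = v' ++ [b]
        rw [← List.append_assoc] at huv
        obtain ⟨hw, hb⟩ := List.append_inj' huv rfl
        cases List.singleton_injective hb
        rw [DFA.evalFrom_append_singleton] at hv
        have hpo : ObsState M (M.evalFrom M.start v') :=
          obs_of_step M (hv ▸ hq)
        exact ⟨hq, Or.inl ⟨M.evalFrom M.start v', ⟨hpo, u, v', hw, hu, rfl⟩, hv⟩⟩

lemma plusDFA_accepts : (plusDFA M).accepts = M.accepts * M.accepts∗ := by
  rw [← Language.mul_self_kstar_comm]
  ext w
  rw [DFA.mem_accepts, plusDFA_eval]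
  constructor
  · rintro ⟨q, ⟨hq, u, v, rfl, hu, hv⟩, hacc⟩
    exact Language.append_mem_mul hu (by rwa [DFA.mem_accepts, DFA.eval, hv])
  · rw [Language.mem_mul]
    rintro ⟨u, hu, v, hv, rfl⟩
    refine ⟨M.evalFrom M.start v, ⟨⟨[], hv⟩, u, v, rfl, hu, rfl⟩, hv⟩

/-- elements of reachable subsets are observable, and the set membership facts -/
lemma plusDFA_eval_obs {w : List α} {q : σ} (hq : q ∈ (plusDFA M).eval w) :
    ObsState M q := by
  rw [plusDFA_eval] at hq; exact hq.1

/-- if some element of `S` can reach accept in `M`, then `S` is observable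
in the subset automaton -/
lemma plus_obs_aux : ∀ (w : List α) (S : Set σ) (q : σ), q ∈ S →
    M.evalFrom q w ∈ M.accept → ∃ q' ∈ (plusDFA M).evalFrom S w, q' ∈ M.accept := by
  intro w
  induction w with
  | nil => exact fun S q hq h => ⟨q, hq, h⟩
  | cons a w ih =>
    intro S q hq h
    rw [DFA.evalFrom] at h ⊢
    simp only [List.foldl_cons] at h ⊢
    refine ih _ (M.step q a) ?_ h
    have : ObsState M (M.step q a) := obs_of_evalFrom M w ⟨[], h⟩
    exact ⟨this, Or.inl ⟨q, hq, rfl⟩⟩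

lemma plusDFA_evalFrom_empty (w : List α) : (plusDFA M).evalFrom ∅ w = ∅ := by
  induction w with
  | nil => rfl
  | cons a w ih =>
    rw [DFA.evalFrom, List.foldl_cons]
    have : (plusDFA M).step ∅ a = ∅ := by
      ext r; simp [plusDFA]
    rw [this]; exact ih

end Aux

theorem T1_closed_kleene_plus {α : Type} [Fintype α] (L : Language α)
    (h : InT α 1 L) : InT α 1 (L * L∗) := by
  classical
  obtain ⟨σ, _, M, hacc, hL, hcard⟩ := h
  subst hL
  -- reachable states of the subset automaton
  let Reach : Set σ → Prop := fun S => ∃ w, (plusDFA M).eval w = S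
  let τ := {S : Set σ // Reach S}
  let N : DFA α τ :=
    { step := fun s a => ⟨(plusDFA M).step s.1 a, by
        obtain ⟨w, hw⟩ := s.2
        exact ⟨w ++ [a], by rw [DFA.eval_append_singleton, hw]⟩⟩
      start := ⟨(plusDFA M).start, ⟨[], rfl⟩⟩
      accept := {s | s.1 ∈ (plusDFA M).accept} }
  have val_evalFrom : ∀ (w : List α) (s : τ),
      (N.evalFrom s w).1 = (plusDFA M).evalFrom s.1 w := by
    intro w
    induction w with
    | nil => intro s; rfl
    | cons a w ih =>
      intro s
      rw [DFA.evalFrom, DFA.evalFrom, List.foldl_cons, List.foldl_cons]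
      exact ih _
  have val_eval : ∀ w : List α, (N.eval w).1 = (plusDFA M).eval w := fun w =>
    val_evalFrom w _
  -- observability transfer
  have obs_of_ne : ∀ s : τ, s.1.Nonempty → ObsState N s := by
    rintro ⟨S, hS⟩ ⟨q, hq⟩
    obtain ⟨w₀, hw₀⟩ := hS
    have hq' : q ∈ (plusDFA M).eval w₀ := by rw [hw₀]; exact hq
    have hqo : ObsState M q := plusDFA_eval_obs M hq'
    obtain ⟨w, hw⟩ := hqo
    obtain ⟨q', hq'1, hq'2⟩ := plus_obs_aux M w S q hq hw
    refine ⟨w, ?_⟩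
    show (N.evalFrom ⟨S, _⟩ w).1 ∈ (plusDFA M).accept
    rw [val_evalFrom]
    exact ⟨q', hq'1, hq'2⟩
  have not_obs_empty : ∀ s : τ, s.1 = ∅ → ¬ ObsState N s := by
    rintro ⟨S, hS⟩ rfl ⟨w, hw⟩
    have : (N.evalFrom ⟨∅, hS⟩ w).1 ∈ (plusDFA M).accept := hw
    rw [val_evalFrom, plusDFA_evalFrom_empty] at this
    obtain ⟨q, hq, -⟩ := this
    exact hq
  refine ⟨τ, Subtype.fintype _, N, ?_, ?_, ?_⟩
  · -- accessible
    rintro ⟨S, w, hw⟩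
    refine ⟨w, Subtype.ext ?_⟩
    rw [show N.eval w = N.evalFrom N.start w from rfl, val_evalFrom]
    exact hw
  · -- accepts
    ext w
    rw [DFA.mem_accepts]
    show (N.eval w).1 ∈ (plusDFA M).accept ↔ _
    rw [val_eval, ← DFA.mem_accepts, plusDFA_accepts]
  · -- at most one semi-observable state
    have key : ∀ s : τ, SemiObsState N s → s.1 = {q : σ | SemiObsState M q} := by
      rintro ⟨S, hS⟩ ⟨hobs, a, hna⟩
      have hSne : S.Nonempty := by
        by_contra hc
        exact not_obs_empty _ (Set.not_nonempty_iff_eq_empty.mp hc) hobs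
      have hstep : (plusDFA M).step S a = ∅ := by
        by_contra hc
        exact hna (obs_of_ne _ (Set.nonempty_iff_ne_empty.mpr hc))
      have hsub : S ⊆ {q : σ | SemiObsState M q} := by
        intro p hp
        obtain ⟨w₀, hw₀⟩ := hS
        have hp' : p ∈ (plusDFA M).eval w₀ := by rw [hw₀]; exact hp
        have hpo : ObsState M p := plusDFA_eval_obs M hp'
        refine ⟨hpo, a, fun hstepo => ?_⟩
        have : M.step p a ∈ (plusDFA M).step S a := ⟨hstepo, Or.inl ⟨p, hp, rfl⟩⟩
        rw [hstep] at this
        exact this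
      -- S nonempty subset of a set of ncard ≤ 1, hence equal
      apply Set.Subset.antisymm hsub
      obtain ⟨p, hp⟩ := hSne
      intro x hx
      have := (Set.ncard_le_one (Set.toFinite _)).mp hcard x hx p (hsub hp)
      rwa [this]
    have : {s : τ | SemiObsState N s}.Subsingleton := by
      intro s₁ h₁ s₂ h₂
      exact Subtype.ext ((key s₁ h₁).trans (key s₂ h₂).symm)
    rcases Set.eq_empty_or_nonempty {s : τ | SemiObsState N s} with he | ⟨x, hx⟩
    · simp [he]
    · rw [this.eq_singleton_of_mem hx, Set.ncard_singleton]
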